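/- Let x, v₁, …, v_m ∈ ℝⁿ, set w = (1/m) Σᵢ vᵢ, and consider the product space (ℝⁿ)^m with the Euclidean product norm ‖(z₁,…,z_m)‖² = Σᵢ ‖zᵢ‖². Define the points X = (x, …, x), Y = (x − 2v₁, …, x − 2v_m), Z = (x + 2v₁ − 4w, …, x + 2v_m − 4w), and for α ∈ ℝ, E(α) = (x − αw, …, x − αw). Then: (a) for every α ∈ ℝ one has ‖E(α) − Y‖ = ‖E(α) − Z‖; and (b) if w ≠ 0 and α* = ((1/m) Σᵢ ‖vᵢ‖²)/‖w‖², then ‖E(α*) − X‖ = ‖E(α*) − Y‖ = ‖E(α*) − Z‖, i.e. E(α*) is equidistant from the three points X, Y, Z. -/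

import Mathlib

theorem stmt_7 {n m : ℕ} (hm : 0 < m)
    (x : EuclideanSpace ℝ (Fin n))
    (v : Fin m → EuclideanSpace ℝ (Fin n))
    (w : EuclideanSpace ℝ (Fin n))
    (hw : w = (m : ℝ)⁻¹ • ∑ i, v i)
    (X Y Z : PiLp 2 fun _ : Fin m => EuclideanSpace ℝ (Fin n))
    (hX : X = WithLp.toLp 2 (fun _ => x))
    (hY : Y = WithLp.toLp 2 (fun i => x - (2 : ℝ) • v i))
    (hZ : Z = WithLp.toLp 2 (fun i => x + (2 : ℝ) • v i - (4 : ℝ) • w))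
    (E : ℝ → PiLp 2 fun _ : Fin m => EuclideanSpace ℝ (Fin n))
    (hE : ∀ α : ℝ, E α = WithLp.toLp 2 (fun _ => x - α • w)) :
    (∀ α : ℝ, ‖E α - Y‖ = ‖E α - Z‖) ∧
      (w ≠ 0 →
        ‖E (((m : ℝ)⁻¹ * ∑ i, ‖v i‖ ^ 2) / ‖w‖ ^ 2) - X‖ =
            ‖E (((m : ℝ)⁻¹ * ∑ i, ‖v i‖ ^ 2) / ‖w‖ ^ 2) - Y‖ ∧
          ‖E (((m : ℝ)⁻¹ * ∑ i, ‖v i‖ ^ 2) / ‖w‖ ^ 2) - Y‖ =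
            ‖E (((m : ℝ)⁻¹ * ∑ i, ‖v i‖ ^ 2) / ‖w‖ ^ 2) - Z‖) := by
  have hm' : (m : ℝ) ≠ 0 := Nat.cast_ne_zero.mpr hm.ne'
  have hnn : ∀ a b : ℝ, 0 ≤ a → 0 ≤ b → a ^ 2 = b ^ 2 → a = b := by
    intro a b ha hb h
    nlinarith [sq_nonneg (a - b), sq_nonneg (a + b)]
  have hsum : ∑ i, (inner ℝ (v i) w : ℝ) = (m : ℝ) * ‖w‖ ^ 2 := by
    have h1 : ∑ i, v i = (m : ℝ) • w := by
      rw [hw, smul_smul, mul_inv_cancel₀ hm', one_smul]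
    rw [← sum_inner, h1, real_inner_smul_left, real_inner_self_eq_norm_sq]
  have hcomp : ∀ (a b : EuclideanSpace ℝ (Fin n)) (s t : ℝ),
      ‖s • a - t • b‖ ^ 2 = s ^ 2 * ‖a‖ ^ 2 - 2 * s * t * (inner ℝ a b : ℝ)
        + t ^ 2 * ‖b‖ ^ 2 := by
    intro a b s t
    rw [norm_sub_sq_real, norm_smul, norm_smul, real_inner_smul_left,
      real_inner_smul_right, mul_pow, mul_pow]
    simp [Real.norm_eq_abs, sq_abs]
    ring
  set S := ∑ i, ‖v i‖ ^ 2 with hS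
  have hEY : ∀ α : ℝ, ‖E α - Y‖ ^ 2
      = 4 * S - 4 * α * ((m : ℝ) * ‖w‖ ^ 2) + (m : ℝ) * (α ^ 2 * ‖w‖ ^ 2) := by
    intro α
    rw [PiLp.norm_sq_eq_of_L2]
    have hc : ∀ i, ‖(E α - Y) i‖ ^ 2
        = 4 * ‖v i‖ ^ 2 - 4 * α * (inner ℝ (v i) w : ℝ) + α ^ 2 * ‖w‖ ^ 2 := by
      intro i
      have h : (E α - Y) i = (2 : ℝ) • v i - α • w := by
        simp only [PiLp.sub_apply, hE, hY]
        module
      rw [h, hcomp]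
      ring
    rw [Finset.sum_congr rfl fun i _ => hc i, Finset.sum_add_distrib,
      Finset.sum_sub_distrib, ← Finset.mul_sum, ← Finset.mul_sum, hsum,
      Finset.sum_const, Finset.card_univ, Fintype.card_fin, nsmul_eq_mul, ← hS]
  have hEZ : ∀ α : ℝ, ‖E α - Z‖ ^ 2
      = 4 * S - 4 * (4 - α) * ((m : ℝ) * ‖w‖ ^ 2)
        + (m : ℝ) * ((4 - α) ^ 2 * ‖w‖ ^ 2) := by
    intro α
    rw [PiLp.norm_sq_eq_of_L2]
    have hc : ∀ i, ‖(E α - Z) i‖ ^ 2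
        = 4 * ‖v i‖ ^ 2 - 4 * (4 - α) * (inner ℝ (v i) w : ℝ)
          + (4 - α) ^ 2 * ‖w‖ ^ 2 := by
      intro i
      have h : (E α - Z) i = (4 - α) • w - (2 : ℝ) • v i := by
        simp only [PiLp.sub_apply, hE, hZ]
        module
      rw [h, hcomp, real_inner_comm]
      ring
    rw [Finset.sum_congr rfl fun i _ => hc i, Finset.sum_add_distrib,
      Finset.sum_sub_distrib, ← Finset.mul_sum, ← Finset.mul_sum, hsum,
      Finset.sum_const, Finset.card_univ, Fintype.card_fin, nsmul_eq_mul, ← hS]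
  have hEX : ∀ α : ℝ, ‖E α - X‖ ^ 2 = (m : ℝ) * (α ^ 2 * ‖w‖ ^ 2) := by
    intro α
    rw [PiLp.norm_sq_eq_of_L2]
    have hc : ∀ i, ‖(E α - X) i‖ ^ 2 = α ^ 2 * ‖w‖ ^ 2 := by
      intro i
      have h : (E α - X) i = (0 : ℝ) • x - α • w := by
        simp only [PiLp.sub_apply, hE, hX]
        module
      rw [h, hcomp]
      simp
    rw [Finset.sum_congr rfl fun i _ => hc i, Finset.sum_const, Finset.card_univ,
      Fintype.card_fin, nsmul_eq_mul]
  constructor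
  · intro α
    apply hnn _ _ (norm_nonneg _) (norm_nonneg _)
    rw [hEY, hEZ]
    ring
  · intro hw0
    have hw2 : ‖w‖ ^ 2 ≠ 0 := pow_ne_zero 2 (norm_ne_zero_iff.mpr hw0)
    set α := ((m : ℝ)⁻¹ * S) / ‖w‖ ^ 2 with hα
    have key : 4 * α * ((m : ℝ) * ‖w‖ ^ 2) = 4 * S := by
      rw [hα]; field_simp
    constructor
    · apply hnn _ _ (norm_nonneg _) (norm_nonneg _)
      rw [hEX, hEY, key]; ring
    · apply hnn _ _ (norm_nonneg _) (norm_nonneg _)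
      rw [hEY, hEZ]; ring
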